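/- Crossover lemma: Let z' and z'' be two choice sequences for the same data (u_i, v_i), i.e. z'_k, z''_k ∈ {v_k, −u_k}, with associated patterns p'(k) = x' + Σ_{i≤k} z'_i living in [a', b'] and p''(k) = x'' + Σ_{i≤k} z''_i living in [a'', b''] with end point y'' = p''(m). If there exists k ∈ {0,...,m} with |p'(k) − p''(k)| ≤ ε, then there exists a choice sequence z with z_j ∈ {v_j, −u_j} for all j whose pattern p (for suitable start point x) lives in a sub-interval of [min{a',a''} − ε/2, max{b',b''} + ε/2] and satisfies p(0) + p(m) = x' + y''. -/

import Mathlib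

theorem stmt_8 (m : ℕ) (hm : 1 ≤ m) (u v : ℕ → ℝ)
    (hu : ∀ i < m, 0 ≤ u i) (hv : ∀ i < m, 0 ≤ v i)
    (z' z'' : ℕ → ℝ)
    (hz' : ∀ k < m, z' k = v k ∨ z' k = -u k)
    (hz'' : ∀ k < m, z'' k = v k ∨ z'' k = -u k)
    (x' x'' a' b' a'' b'' ε : ℝ) (hε : 0 < ε)
    (hlive' : ∀ k ≤ m, x' + ∑ i ∈ Finset.range k, z' i ∈ Set.Icc a' b')
    (hlive'' : ∀ k ≤ m, x'' + ∑ i ∈ Finset.range k, z'' i ∈ Set.Icc a'' b'')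
    (hclose : ∃ k ≤ m,
      |(x' + ∑ i ∈ Finset.range k, z' i) - (x'' + ∑ i ∈ Finset.range k, z'' i)| ≤ ε) :
    ∃ (z : ℕ → ℝ) (x : ℝ), (∀ k < m, z k = v k ∨ z k = -u k) ∧
      (∀ k ≤ m, x + ∑ i ∈ Finset.range k, z i ∈
        Set.Icc (min a' a'' - ε / 2) (max b' b'' + ε / 2)) ∧
      x + (x + ∑ i ∈ Finset.range m, z i)
        = x' + (x'' + ∑ i ∈ Finset.range m, z'' i) := by
  obtain ⟨k, hkm, hd⟩ := hclose
  set δ := (x'' + ∑ i ∈ Finset.range k, z'' i) - (x' + ∑ i ∈ Finset.range k, z' i) with hδ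
  have hd' : |δ| ≤ ε := by
    rw [hδ, abs_sub_comm]; exact hd
  obtain ⟨hd1, hd2⟩ := abs_le.1 hd'
  have key : ∀ j, k ≤ j →
      ∑ i ∈ Finset.range j, (if i < k then z' i else z'' i)
        = (∑ i ∈ Finset.range k, z' i)
          + ((∑ i ∈ Finset.range j, z'' i) - ∑ i ∈ Finset.range k, z'' i) := by
    intro j hj
    rw [Finset.range_eq_Ico, ← Finset.sum_Ico_consecutive _ (Nat.zero_le k) hj]
    have h1 : ∑ i ∈ Finset.Ico 0 k, (if i < k then z' i else z'' i)
        = ∑ i ∈ Finset.Ico 0 k, z' i := by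
      apply Finset.sum_congr rfl
      intro i hi
      simp [(Finset.mem_Ico.1 hi).2]
    have h2 : ∑ i ∈ Finset.Ico k j, (if i < k then z' i else z'' i)
        = ∑ i ∈ Finset.Ico k j, z'' i := by
      apply Finset.sum_congr rfl
      intro i hi
      simp [Nat.not_lt.2 (Finset.mem_Ico.1 hi).1]
    rw [h1, h2, Finset.sum_Ico_eq_sub _ hj, ← Finset.range_eq_Ico, ← Finset.range_eq_Ico]
  refine ⟨fun j => if j < k then z' j else z'' j, x' + δ / 2, ?_, ?_, ?_⟩
  · intro j hj
    by_cases h : j < k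
    · simpa [h] using hz' j hj
    · simpa [h] using hz'' j hj
  · intro j hj
    by_cases h : j ≤ k
    · have hsum : ∑ i ∈ Finset.range j, (if i < k then z' i else z'' i)
          = ∑ i ∈ Finset.range j, z' i := by
        apply Finset.sum_congr rfl
        intro i hi
        simp [lt_of_lt_of_le (Finset.mem_range.1 hi) h]
      rw [Set.mem_Icc, hsum]
      obtain ⟨h1, h2⟩ := hlive' j hj
      constructor
      · have := min_le_left a' a''; linarith
      · have := le_max_left b' b''; linarith
    · push_neg at h
      rw [Set.mem_Icc, key j h.le]
      obtain ⟨h1, h2⟩ := hlive'' j hj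
      constructor
      · have := min_le_right a' a''; linarith [hδ]
      · have := le_max_right b' b''; linarith [hδ]
  · rw [key m hkm]
    linarith [hδ]
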